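/- Let n ≥ 2 and r > 0. Then the origin (0, 0, 0, 0, 0) of ℝ × ℝⁿ × ℝⁿ × Mₙ⁰ × ℝ belongs to U(r); in particular U(r) is a nonempty open set. -/

import Mathlib

open scoped BigOperators
open MeasureTheory

noncomputable section

/-- The Euclidean norm of a vector in `ℝ^m` (coordinates indexed by `Fin m`). -/
def eNorm {m : ℕ} (v : Fin m → ℝ) : ℝ := Real.sqrt (∑ i, v i ^ 2)

/-- `Mₙ⁰`: the submodule of symmetric trace-free `n × n` real matrices. -/
def M0 (n : ℕ) : Submodule ℝ (Matrix (Fin n) (Fin n) ℝ) where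
  carrier := {A | A.IsSymm ∧ A.trace = 0}
  add_mem' := fun ha hb => ⟨ha.1.add hb.1, by rw [Matrix.trace_add, ha.2, hb.2, add_zero]⟩
  zero_mem' := ⟨Matrix.isSymm_zero, Matrix.trace_zero ..⟩
  smul_mem' := fun c _ hA => ⟨hA.1.smul c, by rw [Matrix.trace_smul, hA.2, smul_zero]⟩

/-- The constraint set `K(r) ⊆ ℝ × ℝⁿ × ℝⁿ × Mₙ⁰`:
tuples `(b̃, η̃, ṽ, z̃)` with `b̃ ∈ {−1,1}`, `|ṽ| = r`, `η̃ = b̃ ṽ` and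
`z̃ = ṽ ⊗ ṽ − (|ṽ|²/n) Iₙ`. -/
def Ksp (n : ℕ) (r : ℝ) : Set (ℝ × (Fin n → ℝ) × (Fin n → ℝ) × M0 n) :=
  {p | (p.1 = 1 ∨ p.1 = -1) ∧ eNorm p.2.2.1 = r ∧ p.2.1 = p.1 • p.2.2.1 ∧
    (p.2.2.2 : Matrix (Fin n) (Fin n) ℝ) =
      Matrix.vecMulVec p.2.2.1 p.2.2.1 - ((eNorm p.2.2.1 ^ 2) / n) • (1 : Matrix (Fin n) (Fin n) ℝ)}

namespace OU

/-- soft lemma -/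
lemma zero_mem_interior_convexHull {F : Type*} [AddCommGroup F] [Module ℝ F]
    [TopologicalSpace F] {ι : Type*} [Fintype ι] [Nonempty ι]
    (f : ι → F) (S : F → ι → ℝ) (hScont : Continuous S) (hS0 : S 0 = 0)
    (hTS : ∀ x, ∑ i, S x i • f i = x) (hsum : ∑ i, f i = 0) :
    (0 : F) ∈ interior (convexHull ℝ (Set.range f)) := by
  classical
  set C := convexHull ℝ (Set.range f) with hC
  have hNpos : (0:ℝ) < (Fintype.card ι : ℝ) := by
    exact_mod_cast Fintype.card_pos
  have h0C : (0 : F) ∈ C := by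
    have := Finset.centerMass_mem_convexHull (Finset.univ (α := ι))
      (w := fun _ => (1:ℝ)) (by intro i _; norm_num) (by simp [hNpos])
      (z := f) (by intro i _; exact Set.mem_range_self i)
    simpa [Finset.centerMass, hsum] using this
  have hcomb : ∀ t : ι → ℝ, (∀ i, 0 < t i) → (∑ i, t i) < 1 → (∑ i, t i • f i) ∈ C := by
    intro t ht htlt
    have hupos : 0 < ∑ i, t i :=
      Finset.sum_pos (fun i _ => ht i) Finset.univ_nonempty
    have hq : Finset.univ.centerMass t f ∈ C :=
      Finset.centerMass_mem_convexHull _ (fun i _ => (ht i).le) hupos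
        (fun i _ => Set.mem_range_self i)
    have hres := (convex_convexHull ℝ (Set.range f)) hq h0C
      (a := ∑ i, t i) (b := 1 - ∑ i, t i) (le_of_lt hupos) (by linarith) (by ring)
    rw [Finset.centerMass] at hres
    rwa [smul_smul, mul_inv_cancel₀ (ne_of_gt hupos), one_smul, smul_zero, add_zero] at hres
  set t0 : ι → ℝ := fun _ => 1 / (2 * (Fintype.card ι : ℝ)) with ht0
  set V : Set (ι → ℝ) := {t | (∀ i, 0 < t i) ∧ (∑ i, t i) < 1} with hV
  have hVopen : IsOpen V := by
    have h1 : IsOpen {t : ι → ℝ | ∀ i, 0 < t i} := by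
      have : {t : ι → ℝ | ∀ i, 0 < t i} = ⋂ i, (fun t : ι → ℝ => t i) ⁻¹' Set.Ioi 0 := by
        ext t; simp [Set.mem_iInter]
      rw [this]
      exact isOpen_iInter_of_finite fun i => (continuous_apply i).isOpen_preimage _ isOpen_Ioi
    have h2 : IsOpen {t : ι → ℝ | (∑ i, t i) < 1} :=
      isOpen_lt (by continuity) continuous_const
    exact h1.inter h2
  set W : Set F := (fun x => t0 + S x) ⁻¹' V with hW
  have hWopen : IsOpen W := hVopen.preimage (continuous_const.add hScont)
  have hW0 : (0 : F) ∈ W := by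
    constructor
    · intro i; simp [t0, hS0]; positivity
    · simp [t0, hS0]
      norm_num
  have hWC : W ⊆ C := by
    intro x hx
    have h1 : (∑ i, (t0 + S x) i • f i) ∈ C := hcomb _ hx.1 hx.2
    have h2 : (∑ i, (t0 + S x) i • f i) = x := by
      have : ∀ i, (t0 + S x) i • f i = t0 i • f i + S x i • f i := by
        intro i; rw [Pi.add_apply, add_smul]
      rw [Finset.sum_congr rfl fun i _ => this i, Finset.sum_add_distrib, hTS x]
      have : (∑ i, t0 i • f i) = 0 := by
        rw [← Finset.smul_sum (r := (1 : ℝ) / (2 * (Fintype.card ι : ℝ)))]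
        rw [hsum, smul_zero]
      rw [this, zero_add]
    rwa [h2] at h1
  exact interior_mono hWC (mem_interior.2 ⟨W, subset_rfl, hWopen, hW0⟩)

/-! ### The concrete family -/

abbrev Esp (n : ℕ) := ℝ × (Fin n → ℝ) × (Fin n → ℝ) × M0 n
abbrev Idx (n : ℕ) := Fin n × Fin n × Bool × Bool × Bool

def ee (b : Bool) : ℝ := if b then 1 else -1

def dd (n : ℕ) (i k : Fin n) : ℝ := if i = k then 1 else 0

def vv (n : ℕ) (r : ℝ) (i j : Fin n) (s : Bool) : Fin n → ℝ :=
  fun k => if i = j then r * dd n i k else (r / Real.sqrt 2) * (dd n i k + ee s * dd n j k)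

lemma ee_sq (b : Bool) : ee b * ee b = 1 := by cases b <;> simp [ee]

lemma sum_dd_mul (n : ℕ) (k l : Fin n) :
    ∑ i, dd n i k * dd n i l = if k = l then 1 else 0 := by
  simp only [dd, ite_mul, one_mul, zero_mul, Finset.sum_ite_eq', Finset.mem_univ, if_true]

lemma sum_dd (n : ℕ) (k : Fin n) : ∑ i, dd n i k = 1 := by
  simp [dd]

lemma P1 (n : ℕ) (r : ℝ) (i j k l : Fin n) :
    ∑ s : Bool, vv n r i j s k * vv n r i j s l
      = r^2 * (dd n i k * dd n i l + dd n j k * dd n j l) := by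
  have hc2 : (r / Real.sqrt 2)^2 = r^2/2 := by
    rw [div_pow, Real.sq_sqrt (by norm_num : (0:ℝ) ≤ 2)]
  by_cases h : i = j
  · subst h; simp [vv]; ring
  · simp only [vv, if_neg h, Fintype.sum_bool, ee, if_pos, if_neg]
    norm_num
    linear_combination (2 * (dd n i k * dd n i l + dd n j k * dd n j l)) * hc2

lemma P2 (n : ℕ) (r : ℝ) (i j k l : Fin n) :
    ∑ s : Bool, ee s * (vv n r i j s k * vv n r i j s l)
      = if i = j then 0 else r^2 * (dd n i k * dd n j l + dd n j k * dd n i l) := by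
  have hc2 : (r / Real.sqrt 2)^2 = r^2/2 := by
    rw [div_pow, Real.sq_sqrt (by norm_num : (0:ℝ) ≤ 2)]
  by_cases h : i = j
  · subst h; simp [vv, ee]
  · simp only [vv, if_neg h, Fintype.sum_bool, ee]
    norm_num
    linear_combination (2 * (dd n i k * dd n j l + dd n j k * dd n i l)) * hc2

lemma sum_dd_sq (n : ℕ) (i : Fin n) : ∑ k, dd n i k * dd n i k = 1 := by
  simp [dd]

lemma sum_sq_vv (n : ℕ) (r : ℝ) (i j : Fin n) (s : Bool) :
    ∑ k, (vv n r i j s k)^2 = r^2 := by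
  have hc2 : (r / Real.sqrt 2)^2 = r^2/2 := by
    rw [div_pow, Real.sq_sqrt (by norm_num : (0:ℝ) ≤ 2)]
  by_cases h : i = j
  · subst h
    have key : ∀ k, (vv n r i i s k)^2 = r^2 * (dd n i k * dd n i k) := by
      intro k; simp [vv]; ring
    rw [Finset.sum_congr rfl fun k _ => key k, ← Finset.mul_sum, sum_dd_sq, mul_one]
  · have key : ∀ k, (vv n r i j s k)^2
        = r^2/2 * (dd n i k * dd n i k + dd n j k * dd n j k) := by
      intro k
      have hz : dd n i k * dd n j k = 0 := by
        simp only [dd]; split_ifs with h1 h2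
        · exact absurd (h1.trans h2.symm) h
        all_goals ring
      have hs : ee s * ee s = 1 := ee_sq s
      simp only [vv, if_neg h]
      linear_combination ((dd n i k + ee s * dd n j k)^2) * hc2
        + (r^2/2 * (dd n j k * dd n j k)) * hs + (r^2 * ee s) * hz
    rw [Finset.sum_congr rfl fun k _ => key k, ← Finset.mul_sum]
    rw [Finset.sum_add_distrib, sum_dd_sq, sum_dd_sq]
    ring

lemma eNorm_vv (n : ℕ) (r : ℝ) (hr : 0 ≤ r) (i j : Fin n) (s : Bool) :
    eNorm (vv n r i j s) = r := by
  rw [eNorm, sum_sq_vv, Real.sqrt_sq hr]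

lemma eNorm_smul (m : ℕ) (c : ℝ) (w : Fin m → ℝ) : eNorm (c • w) = |c| * eNorm w := by
  rw [eNorm, eNorm]
  have : ∀ k, ((c • w) k)^2 = c^2 * (w k)^2 := by intro k; simp [mul_pow]
  rw [Finset.sum_congr rfl fun k _ => this k, ← Finset.mul_sum,
    Real.sqrt_mul (sq_nonneg c), Real.sqrt_sq_eq_abs]

def zmat (n : ℕ) (r : ℝ) (i j : Fin n) (s : Bool) : Matrix (Fin n) (Fin n) ℝ :=
  Matrix.vecMulVec (vv n r i j s) (vv n r i j s) - (r^2/n) • 1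

lemma zmat_apply (n : ℕ) (r : ℝ) (i j : Fin n) (s : Bool) (k l : Fin n) :
    zmat n r i j s k l = vv n r i j s k * vv n r i j s l
      - (r^2/n) * (if k = l then 1 else 0) := by
  simp [zmat, Matrix.sub_apply, Matrix.vecMulVec_apply, Matrix.smul_apply, Matrix.one_apply]

lemma zmat_mem (n : ℕ) (hn : 0 < n) (r : ℝ) (i j : Fin n) (s : Bool) :
    zmat n r i j s ∈ M0 n := by
  constructor
  · show Matrix.transpose (zmat n r i j s) = zmat n r i j s
    ext k l
    rw [Matrix.transpose_apply, zmat_apply, zmat_apply]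
    rw [mul_comm (vv n r i j s l)]
    congr 2
    simp [eq_comm]
  · have hcard : (Fintype.card (Fin n) : ℝ) = n := by simp
    rw [zmat, Matrix.trace_sub, Matrix.trace_smul, Matrix.trace_one]
    have htr : Matrix.trace (Matrix.vecMulVec (vv n r i j s) (vv n r i j s)) = r^2 := by
      rw [Matrix.trace]
      have : ∀ k, (Matrix.vecMulVec (vv n r i j s) (vv n r i j s)).diag k
          = (vv n r i j s k)^2 := by
        intro k; simp [Matrix.diag, Matrix.vecMulVec_apply]; ring
      rw [Finset.sum_congr rfl fun k _ => this k, sum_sq_vv]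
    rw [htr]
    have hn' : (n:ℝ) ≠ 0 := Nat.cast_ne_zero.2 hn.ne'
    simp only [smul_eq_mul, hcard]
    field_simp
    simp

def zM (n : ℕ) (hn : 0 < n) (r : ℝ) (i j : Fin n) (s : Bool) : M0 n :=
  ⟨zmat n r i j s, zmat_mem n hn r i j s⟩

def ff (n : ℕ) (hn : 0 < n) (r : ℝ) : Idx n → Esp n :=
  fun t => (ee t.2.2.2.1,
    (ee t.2.2.2.1 * ee t.2.2.2.2) • vv n r t.1 t.2.1 t.2.2.1,
    ee t.2.2.2.2 • vv n r t.1 t.2.1 t.2.2.1,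
    zM n hn r t.1 t.2.1 t.2.2.1)

lemma ff_mem_Ksp (n : ℕ) (hn : 0 < n) (r : ℝ) (hr : 0 < r) (t : Idx n) :
    ff n hn r t ∈ Ksp n r := by
  obtain ⟨i, j, s, b, σ⟩ := t
  have habs : |ee σ| = 1 := by cases σ <;> simp [ee]
  have hnorm : eNorm (ee σ • vv n r i j s) = r := by
    rw [eNorm_smul, habs, one_mul, eNorm_vv n r hr.le]
  refine ⟨by cases b <;> simp [ff, ee], hnorm, ?_, ?_⟩
  · show (ee b * ee σ) • vv n r i j s = ee b • ee σ • vv n r i j s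
    rw [smul_smul]
  · show (zM n hn r i j s : Matrix (Fin n) (Fin n) ℝ)
        = Matrix.vecMulVec (ee σ • vv n r i j s) (ee σ • vv n r i j s)
          - ((eNorm (ee σ • vv n r i j s))^2/(n:ℝ)) • 1
    rw [hnorm]
    show zmat n r i j s = _
    ext k l
    rw [zmat_apply]
    simp only [Matrix.sub_apply, Matrix.vecMulVec_apply, Matrix.smul_apply, Matrix.one_apply,
      Pi.smul_apply, smul_eq_mul]
    have hs := ee_sq σ
    linear_combination (- (vv n r i j s k * vv n r i j s l)) * hs

/-! ### The coefficient function -/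

def SS (n : ℕ) (r : ℝ) : Esp n → Idx n → ℝ :=
  fun x t =>
    (if t.1 = t.2.1 then (x.2.2.2 : Matrix (Fin n) (Fin n) ℝ) t.1 t.1
      else ee t.2.2.1 * (x.2.2.2 : Matrix (Fin n) (Fin n) ℝ) t.1 t.2.1) / (8*r^2)
    + ee t.2.2.2.1 * (x.1 / (8*(n:ℝ)^2))
    + ee t.2.2.2.2 * (if t.1 = t.2.1 then x.2.2.1 t.1 / (8*r) else 0)
    + (ee t.2.2.2.1 * ee t.2.2.2.2) * (if t.1 = t.2.1 then x.2.1 t.1 / (8*r) else 0)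

lemma SS_zero (n : ℕ) (r : ℝ) : SS n r 0 = 0 := by
  funext t
  simp [SS]

lemma SS_cont (n : ℕ) (r : ℝ) : Continuous (SS n r) := by
  apply continuous_pi
  rintro ⟨i, j, s, b, σ⟩
  have hA : Continuous fun x : Esp n => (x.2.2.2 : Matrix (Fin n) (Fin n) ℝ) :=
    continuous_subtype_val.comp (continuous_snd.comp (continuous_snd.comp continuous_snd))
  have h1 : Continuous fun x : Esp n => x.1 := continuous_fst
  have hp : ∀ m : Fin n, Continuous fun x : Esp n => x.2.1 m := fun m =>
    (continuous_apply m).comp (continuous_fst.comp continuous_snd)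
  have hq : ∀ m : Fin n, Continuous fun x : Esp n => x.2.2.1 m := fun m =>
    (continuous_apply m).comp (continuous_fst.comp (continuous_snd.comp continuous_snd))
  by_cases h : i = j
  · simp only [SS, h, if_true, if_pos rfl]
    exact ((((hA.matrix_elem j j).div_const _).add
      (continuous_const.mul (h1.div_const _))).add
      (continuous_const.mul ((hq j).div_const _))).add
      (continuous_const.mul ((hp j).div_const _))
  · simp only [SS, h, if_false, mul_zero, add_zero]
    exact (((continuous_const.mul (hA.matrix_elem i j)).div_const _).add
      (continuous_const.mul (h1.div_const _)))

/-! ### The sum of the family is zero -/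

lemma sum_ff_1 (n : ℕ) : ∑ t : Idx n, ee t.2.2.2.1 = 0 := by
  simp only [Fintype.sum_prod_type]
  refine Finset.sum_eq_zero fun i _ => ?_
  refine Finset.sum_eq_zero fun j _ => ?_
  refine Finset.sum_eq_zero fun s _ => ?_
  simp [Fintype.sum_bool, ee]

lemma sum_ff_2 (n : ℕ) (r : ℝ) (k : Fin n) :
    ∑ t : Idx n, (ee t.2.2.2.1 * ee t.2.2.2.2) * vv n r t.1 t.2.1 t.2.2.1 k = 0 := by
  simp only [Fintype.sum_prod_type]
  refine Finset.sum_eq_zero fun i _ => ?_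
  refine Finset.sum_eq_zero fun j _ => ?_
  refine Finset.sum_eq_zero fun s _ => ?_
  simp [Fintype.sum_bool, ee]

lemma sum_ff_3 (n : ℕ) (r : ℝ) (k : Fin n) :
    ∑ t : Idx n, ee t.2.2.2.2 * vv n r t.1 t.2.1 t.2.2.1 k = 0 := by
  simp only [Fintype.sum_prod_type]
  refine Finset.sum_eq_zero fun i _ => ?_
  refine Finset.sum_eq_zero fun j _ => ?_
  refine Finset.sum_eq_zero fun s _ => ?_
  simp [Fintype.sum_bool, ee]

lemma sum_ff_4 (n : ℕ) (hn : 0 < n) (r : ℝ) (k l : Fin n) :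
    ∑ t : Idx n, zmat n r t.1 t.2.1 t.2.2.1 k l = 0 := by
  have hn' : (n:ℝ) ≠ 0 := Nat.cast_ne_zero.2 hn.ne'
  have hcard : (Finset.univ (α := Fin n)).card = n := by simp
  set C : ℝ := if k = l then 1 else 0 with hC
  simp only [Fintype.sum_prod_type]
  have hinner : ∀ (i j : Fin n) (s : Bool),
      (∑ b : Bool, ∑ σ : Bool, zmat n r i j s k l) = 4 * zmat n r i j s k l := by
    intro i j s; simp [Fintype.sum_bool]; ring
  rw [Finset.sum_congr rfl fun i _ => Finset.sum_congr rfl fun j _ =>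
    Finset.sum_congr rfl fun s _ => hinner i j s]
  have hstep1 : ∀ i j : Fin n, (∑ s : Bool, 4 * zmat n r i j s k l)
      = 4*r^2*(dd n i k * dd n i l + dd n j k * dd n j l) - 8*(r^2/n)*C := by
    intro i j
    rw [← Finset.mul_sum]
    have h1 : (∑ s : Bool, zmat n r i j s k l)
        = r^2*(dd n i k * dd n i l + dd n j k * dd n j l) - 2*(r^2/n)*C := by
      simp only [zmat_apply, Finset.sum_sub_distrib, P1, ← hC]
      rw [Finset.sum_const]
      simp only [Finset.card_univ, Fintype.card_bool, nsmul_eq_mul]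
      push_cast
      ring
    rw [h1]; ring
  rw [Finset.sum_congr rfl fun i _ => Finset.sum_congr rfl fun j _ => hstep1 i j]
  have hstep2 : ∀ i : Fin n,
      (∑ j, (4*r^2*(dd n i k * dd n i l + dd n j k * dd n j l) - 8*(r^2/n)*C))
      = (n:ℝ)*(4*r^2*(dd n i k * dd n i l) - 8*(r^2/n)*C) + 4*r^2*C := by
    intro i
    have hterm : ∀ j : Fin n,
        4*r^2*(dd n i k * dd n i l + dd n j k * dd n j l) - 8*(r^2/n)*C
        = (4*r^2*(dd n i k * dd n i l) - 8*(r^2/n)*C) + 4*r^2*(dd n j k * dd n j l) := by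
      intro j; ring
    rw [Finset.sum_congr rfl fun j _ => hterm j, Finset.sum_add_distrib, Finset.sum_const,
      ← Finset.mul_sum, sum_dd_mul, hcard, nsmul_eq_mul, ← hC]
  rw [Finset.sum_congr rfl fun i _ => hstep2 i]
  rw [Finset.sum_add_distrib, Finset.sum_const, ← Finset.mul_sum]
  have : (∑ i, (4*r^2*(dd n i k * dd n i l) - 8*(r^2/n)*C))
      = 4*r^2*C - (n:ℝ)*(8*(r^2/n)*C) := by
    have hterm : ∀ i : Fin n, 4*r^2*(dd n i k * dd n i l) - 8*(r^2/n)*C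
        = 4*r^2*(dd n i k * dd n i l) + (- (8*(r^2/n)*C)) := by intro i; ring
    rw [Finset.sum_congr rfl fun i _ => hterm i, Finset.sum_add_distrib, Finset.sum_const,
      ← Finset.mul_sum, sum_dd_mul, hcard, nsmul_eq_mul, ← hC]
    ring
  rw [this, hcard, nsmul_eq_mul]
  field_simp
  ring

lemma sum_ff (n : ℕ) (hn : 0 < n) (r : ℝ) : ∑ t : Idx n, ff n hn r t = 0 := by
  have h1 : (∑ t : Idx n, ff n hn r t).1 = 0 := by
    rw [Prod.fst_sum]; exact sum_ff_1 n
  have h2 : (∑ t : Idx n, ff n hn r t).2.1 = 0 := by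
    rw [Prod.snd_sum, Prod.fst_sum]
    funext k
    rw [Finset.sum_apply]
    simpa [ff, Pi.smul_apply, smul_eq_mul] using sum_ff_2 n r k
  have h3 : (∑ t : Idx n, ff n hn r t).2.2.1 = 0 := by
    rw [Prod.snd_sum, Prod.snd_sum, Prod.fst_sum]
    funext k
    rw [Finset.sum_apply]
    simpa [ff, Pi.smul_apply, smul_eq_mul] using sum_ff_3 n r k
  have h4 : (∑ t : Idx n, ff n hn r t).2.2.2 = 0 := by
    rw [Prod.snd_sum, Prod.snd_sum, Prod.snd_sum]
    apply Subtype.ext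
    rw [Submodule.coe_sum]
    show (∑ t : Idx n, (zmat n r t.1 t.2.1 t.2.2.1 : Matrix (Fin n) (Fin n) ℝ)) = 0
    ext k l
    rw [Matrix.sum_apply]
    simpa using sum_ff_4 n hn r k l
  have : ∑ t : Idx n, ff n hn r t
      = ((∑ t : Idx n, ff n hn r t).1, (∑ t : Idx n, ff n hn r t).2.1,
        (∑ t : Idx n, ff n hn r t).2.2.1, (∑ t : Idx n, ff n hn r t).2.2.2) := rfl
  rw [this, h1, h2, h3, h4]
  rfl

/-! ### The coefficient identity -/

lemma TS1 (n : ℕ) (hn : 0 < n) (r : ℝ) (x : Esp n) :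
    ∑ t : Idx n, SS n r x t * ee t.2.2.2.1 = x.1 := by
  have hn' : (n:ℝ) ≠ 0 := Nat.cast_ne_zero.2 hn.ne'
  simp only [Fintype.sum_prod_type]
  have hinner : ∀ (i j : Fin n) (s : Bool),
      (∑ b : Bool, ∑ σ : Bool, SS n r x (i, j, s, b, σ) * ee b)
      = 4 * (x.1/(8*(n:ℝ)^2)) := by
    intro i j s
    simp only [SS, Fintype.sum_bool, ee, if_true, if_false, Bool.false_eq_true]
    ring
  rw [Finset.sum_congr rfl fun i _ => Finset.sum_congr rfl fun j _ =>
    Finset.sum_congr rfl fun s _ => hinner i j s]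
  simp only [Finset.sum_const, Finset.card_univ, Fintype.card_bool, Fintype.card_fin,
    nsmul_eq_mul]
  field_simp
  ring

lemma TS2 (n : ℕ) (r : ℝ) (hr : r ≠ 0) (x : Esp n) (k : Fin n) :
    ∑ t : Idx n, SS n r x t * ((ee t.2.2.2.1 * ee t.2.2.2.2) * vv n r t.1 t.2.1 t.2.2.1 k)
      = x.2.1 k := by
  simp only [Fintype.sum_prod_type]
  have hinner : ∀ (i j : Fin n) (s : Bool),
      (∑ b : Bool, ∑ σ : Bool, SS n r x (i, j, s, b, σ) * ((ee b * ee σ) * vv n r i j s k))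
      = 4 * ((if i = j then x.2.1 i/(8*r) else 0) * vv n r i j s k) := by
    intro i j s
    simp only [SS, Fintype.sum_bool, ee, if_true, if_false, Bool.false_eq_true]
    ring
  rw [Finset.sum_congr rfl fun i _ => Finset.sum_congr rfl fun j _ =>
    Finset.sum_congr rfl fun s _ => hinner i j s]
  have hdiag : ∀ (i j : Fin n) (s : Bool),
      4 * ((if i = j then x.2.1 i/(8*r) else 0) * vv n r i j s k)
      = if i = j then x.2.1 i * dd n i k / 2 else 0 := by
    intro i j s
    by_cases h : i = j
    · subst h
      simp only [if_pos rfl, vv, eq_self_iff_true, if_true]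
      field_simp
      ring
    · simp [h]
  rw [Finset.sum_congr rfl fun i _ => Finset.sum_congr rfl fun j _ =>
    Finset.sum_congr rfl fun s _ => hdiag i j s]
  simp only [Finset.sum_const, Finset.card_univ, Fintype.card_bool, nsmul_eq_mul, Nat.cast_ofNat]
  have hj : ∀ i : Fin n,
      (∑ j, (2:ℝ) * (if i = j then x.2.1 i * dd n i k / 2 else 0))
      = x.2.1 i * dd n i k := by
    intro i
    rw [← Finset.mul_sum, Finset.sum_ite_eq]
    simp; ring
  rw [Finset.sum_congr rfl fun i _ => hj i]
  simp [dd, mul_ite, mul_one, mul_zero]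

lemma TS3 (n : ℕ) (r : ℝ) (hr : r ≠ 0) (x : Esp n) (k : Fin n) :
    ∑ t : Idx n, SS n r x t * (ee t.2.2.2.2 * vv n r t.1 t.2.1 t.2.2.1 k)
      = x.2.2.1 k := by
  simp only [Fintype.sum_prod_type]
  have hinner : ∀ (i j : Fin n) (s : Bool),
      (∑ b : Bool, ∑ σ : Bool, SS n r x (i, j, s, b, σ) * (ee σ * vv n r i j s k))
      = 4 * ((if i = j then x.2.2.1 i/(8*r) else 0) * vv n r i j s k) := by
    intro i j s
    simp only [SS, Fintype.sum_bool, ee, if_true, if_false, Bool.false_eq_true]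
    ring
  rw [Finset.sum_congr rfl fun i _ => Finset.sum_congr rfl fun j _ =>
    Finset.sum_congr rfl fun s _ => hinner i j s]
  have hdiag : ∀ (i j : Fin n) (s : Bool),
      4 * ((if i = j then x.2.2.1 i/(8*r) else 0) * vv n r i j s k)
      = if i = j then x.2.2.1 i * dd n i k / 2 else 0 := by
    intro i j s
    by_cases h : i = j
    · subst h
      simp only [if_pos rfl, vv, eq_self_iff_true, if_true]
      field_simp
      ring
    · simp [h]
  rw [Finset.sum_congr rfl fun i _ => Finset.sum_congr rfl fun j _ =>
    Finset.sum_congr rfl fun s _ => hdiag i j s]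
  simp only [Finset.sum_const, Finset.card_univ, Fintype.card_bool, nsmul_eq_mul, Nat.cast_ofNat]
  have hj : ∀ i : Fin n,
      (∑ j, (2:ℝ) * (if i = j then x.2.2.1 i * dd n i k / 2 else 0))
      = x.2.2.1 i * dd n i k := by
    intro i
    rw [← Finset.mul_sum, Finset.sum_ite_eq]
    simp; ring
  rw [Finset.sum_congr rfl fun i _ => hj i]
  simp [dd, mul_ite, mul_one, mul_zero]

lemma TS4 (n : ℕ) (hn : 0 < n) (r : ℝ) (hr : r ≠ 0) (x : Esp n) (k l : Fin n) :
    ∑ t : Idx n, SS n r x t * zmat n r t.1 t.2.1 t.2.2.1 k l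
      = (x.2.2.2 : Matrix (Fin n) (Fin n) ℝ) k l := by
  obtain ⟨hsym, htr⟩ := x.2.2.2.prop
  set A := (x.2.2.2 : Matrix (Fin n) (Fin n) ℝ) with hA
  have htr' : ∑ i, A i i = 0 := by
    simpa [Matrix.trace, Matrix.diag] using htr
  set C : ℝ := if k = l then 1 else 0 with hC
  simp only [Fintype.sum_prod_type]
  have hinner : ∀ (i j : Fin n) (s : Bool),
      (∑ b : Bool, ∑ σ : Bool, SS n r x (i, j, s, b, σ) * zmat n r i j s k l)
      = 4 * (((if i = j then A i i else ee s * A i j)/(8*r^2)) * zmat n r i j s k l) := by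
    intro i j s
    simp only [SS, Fintype.sum_bool, ee, if_true, if_false, Bool.false_eq_true, ← hA]
    ring
  rw [Finset.sum_congr rfl fun i _ => Finset.sum_congr rfl fun j _ =>
    Finset.sum_congr rfl fun s _ => hinner i j s]
  have hkey : ∀ i j : Fin n,
      (∑ s : Bool, 4 * (((if i = j then A i i else ee s * A i j)/(8*r^2))
        * zmat n r i j s k l))
      = (1/(2*r^2)) * (r^2 * A i j * (dd n i k * dd n j l + dd n j k * dd n i l)
          - (if i = j then 2*A i i else 0) * ((r^2/n) * C)) := by
    intro i j
    have ha : (∑ s : Bool, (if i = j then A i i else ee s * A i j)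
          * (vv n r i j s k * vv n r i j s l))
        = r^2 * A i j * (dd n i k * dd n j l + dd n j k * dd n i l) := by
      by_cases h : i = j
      · subst h
        simp only [eq_self_iff_true, if_true]
        rw [← Finset.mul_sum, P1]
        ring
      · simp only [if_neg h]
        have hre : ∀ s : Bool, (ee s * A i j) * (vv n r i j s k * vv n r i j s l)
            = A i j * (ee s * (vv n r i j s k * vv n r i j s l)) := fun s => by ring
        rw [Finset.sum_congr rfl fun s _ => hre s, ← Finset.mul_sum, P2, if_neg h]
        ring
    have hb : (∑ s : Bool, (if i = j then A i i else ee s * A i j))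
        = (if i = j then 2*A i i else 0) := by
      by_cases h : i = j
      · simp only [if_pos h, Fintype.sum_bool]
        ring
      · simp [h, Fintype.sum_bool, ee]
    calc (∑ s : Bool, 4 * (((if i = j then A i i else ee s * A i j)/(8*r^2))
          * zmat n r i j s k l))
        = (1/(2*r^2)) * ∑ s : Bool, ((if i = j then A i i else ee s * A i j)
            * zmat n r i j s k l) := by
          rw [Finset.mul_sum]
          refine Finset.sum_congr rfl fun s _ => ?_
          field_simp
          split_ifs <;> ring
      _ = _ := by
          have hz : ∀ s : Bool, (if i = j then A i i else ee s * A i j) * zmat n r i j s k l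
              = (if i = j then A i i else ee s * A i j)
                  * (vv n r i j s k * vv n r i j s l)
                - (if i = j then A i i else ee s * A i j) * ((r^2/n) * C) := by
            intro s; rw [zmat_apply, ← hC]; ring
          rw [Finset.sum_congr rfl fun s _ => hz s, Finset.sum_sub_distrib, ha,
            ← Finset.sum_mul, hb]
  rw [Finset.sum_congr rfl fun i _ => Finset.sum_congr rfl fun j _ => hkey i j]
  have hj : ∀ i : Fin n,
      (∑ j, (1/(2*r^2)) * (r^2 * A i j * (dd n i k * dd n j l + dd n j k * dd n i l)
          - (if i = j then 2*A i i else 0) * ((r^2/n) * C)))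
      = (1/(2*r^2)) * (r^2 * (dd n i k * A i l + dd n i l * A i k)
          - 2*A i i * ((r^2/n) * C)) := by
    intro i
    rw [← Finset.mul_sum]
    congr 1
    rw [Finset.sum_sub_distrib]
    congr 1
    · have hre : ∀ j : Fin n,
          r^2 * A i j * (dd n i k * dd n j l + dd n j k * dd n i l)
          = (r^2 * dd n i k) * (A i j * dd n j l) + (r^2 * dd n i l) * (A i j * dd n j k) := by
        intro j; ring
      rw [Finset.sum_congr rfl fun j _ => hre j, Finset.sum_add_distrib,
        ← Finset.mul_sum, ← Finset.mul_sum]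
      have e1 : (∑ j, A i j * dd n j l) = A i l := by
        simp [dd, mul_ite, mul_one, mul_zero]
      have e2 : (∑ j, A i j * dd n j k) = A i k := by
        simp [dd, mul_ite, mul_one, mul_zero]
      rw [e1, e2]
      ring
    · rw [← Finset.sum_mul, Finset.sum_ite_eq]
      simp
  rw [Finset.sum_congr rfl fun i _ => hj i]
  rw [← Finset.mul_sum]
  have hfin : (∑ i, (r^2 * (dd n i k * A i l + dd n i l * A i k) - 2*A i i * ((r^2/n) * C)))
      = r^2 * (A k l + A l k) := by
    rw [Finset.sum_sub_distrib]
    have e3 : (∑ i, r^2 * (dd n i k * A i l + dd n i l * A i k)) = r^2 * (A k l + A l k) := by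
      rw [← Finset.mul_sum, Finset.sum_add_distrib]
      have g1 : (∑ i, dd n i k * A i l) = A k l := by
        simp [dd, ite_mul, one_mul, zero_mul]
      have g2 : (∑ i, dd n i l * A i k) = A l k := by
        simp [dd, ite_mul, one_mul, zero_mul]
      rw [g1, g2]
    have e4 : (∑ i, 2*A i i * ((r^2/n) * C)) = 0 := by
      have hre : ∀ i : Fin n, 2*A i i * ((r^2/n) * C) = A i i * (2*((r^2/n) * C)) := by
        intro i; ring
      rw [Finset.sum_congr rfl fun i _ => hre i, ← Finset.sum_mul, htr', zero_mul]
    rw [e3, e4, sub_zero]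
  rw [hfin, hsym.apply k l]
  field_simp
  ring

lemma sum_SS_ff (n : ℕ) (hn : 0 < n) (r : ℝ) (hr : r ≠ 0) (x : Esp n) :
    ∑ t : Idx n, SS n r x t • ff n hn r t = x := by
  have h1 : (∑ t : Idx n, SS n r x t • ff n hn r t).1 = x.1 := by
    rw [Prod.fst_sum]
    simpa [ff, Prod.smul_fst, smul_eq_mul] using TS1 n hn r x
  have h2 : (∑ t : Idx n, SS n r x t • ff n hn r t).2.1 = x.2.1 := by
    rw [Prod.snd_sum, Prod.fst_sum]
    funext k
    rw [Finset.sum_apply]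
    simpa [ff, Prod.smul_snd, Prod.smul_fst, Pi.smul_apply, smul_eq_mul, mul_assoc]
      using TS2 n r hr x k
  have h3 : (∑ t : Idx n, SS n r x t • ff n hn r t).2.2.1 = x.2.2.1 := by
    rw [Prod.snd_sum, Prod.snd_sum, Prod.fst_sum]
    funext k
    rw [Finset.sum_apply]
    simpa [ff, Prod.smul_snd, Prod.smul_fst, Pi.smul_apply, smul_eq_mul, mul_assoc]
      using TS3 n r hr x k
  have h4 : (∑ t : Idx n, SS n r x t • ff n hn r t).2.2.2 = x.2.2.2 := by
    rw [Prod.snd_sum, Prod.snd_sum, Prod.snd_sum]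
    apply Subtype.ext
    rw [Submodule.coe_sum]
    have : ∀ t : Idx n, ((SS n r x t • ff n hn r t).2.2.2 : Matrix (Fin n) (Fin n) ℝ)
        = SS n r x t • zmat n r t.1 t.2.1 t.2.2.1 := by
      intro t; rfl
    rw [Finset.sum_congr rfl fun t _ => this t]
    ext u w
    rw [Matrix.sum_apply]
    simpa [Matrix.smul_apply, smul_eq_mul] using TS4 n hn r hr x u w
  have hrepr : ∑ t : Idx n, SS n r x t • ff n hn r t
      = ((∑ t : Idx n, SS n r x t • ff n hn r t).1,
        (∑ t : Idx n, SS n r x t • ff n hn r t).2.1,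
        (∑ t : Idx n, SS n r x t • ff n hn r t).2.2.1,
        (∑ t : Idx n, SS n r x t • ff n hn r t).2.2.2) := rfl
  rw [hrepr, h1, h2, h3, h4]

end OU

/-- `U(r)`: the interior of `convexHull (K(r)) × [−1,1]` in `ℝ × ℝⁿ × ℝⁿ × Mₙ⁰ × ℝ`. -/
def Usp (n : ℕ) (r : ℝ) : Set ((ℝ × (Fin n → ℝ) × (Fin n → ℝ) × M0 n) × ℝ) :=
  interior ((convexHull ℝ (Ksp n r)) ×ˢ Set.Icc (-1 : ℝ) 1)

/-- For `n ≥ 2` and `r > 0` the origin of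
`ℝ × ℝⁿ × ℝⁿ × Mₙ⁰ × ℝ` belongs to `U(r)`; in particular `U(r)` is a nonempty open set. -/
theorem origin_mem_U (n : ℕ) (hn : 2 ≤ n) (r : ℝ) (hr : 0 < r) :
    ((0, 0, 0, 0), (0 : ℝ)) ∈ Usp n r ∧ (Usp n r).Nonempty ∧ IsOpen (Usp n r) := by
  have hn0 : 0 < n := by omega
  haveI : Nonempty (Fin n) := ⟨⟨0, hn0⟩⟩
  have hmem : (0 : OU.Esp n) ∈ interior (convexHull ℝ (Ksp n r)) := by
    have h0 := OU.zero_mem_interior_convexHull (OU.ff n hn0 r) (OU.SS n r)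
      (OU.SS_cont n r) (OU.SS_zero n r) (OU.sum_SS_ff n hn0 r hr.ne') (OU.sum_ff n hn0 r)
    exact interior_mono (convexHull_mono (Set.range_subset_iff.2
      (OU.ff_mem_Ksp n hn0 r hr))) h0
  have hmem2 : ((0, 0, 0, 0), (0:ℝ)) ∈ Usp n r := by
    rw [Usp, interior_prod_eq]
    refine ⟨hmem, ?_⟩
    rw [interior_Icc]
    exact ⟨by norm_num, by norm_num⟩
  refine ⟨hmem2, ⟨_, hmem2⟩, ?_⟩
  rw [Usp]
  exact isOpen_interior

end
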